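/- If (x, n, B, k) is a prefix polymorphism and j is the number of digits of n in base B (i.e., B^(j−1) ≤ n < B^j), then (k − 1)·(n − 1) ≤ j. -/
import Mathlib

/-- A quadruple `(x, n, B, k)` of positive integers with `B ≥ 2` is a *prefix
polymorphism* if `x^n = B^k·n + x` and `B^(k-1) ≤ x < B^k` (i.e. `x` has exactly
`k` digits in base `B`). -/
def IsPrefixPolymorphism (x n B k : ℕ) : Prop :=
  0 < x ∧ 0 < n ∧ 2 ≤ B ∧ 0 < k ∧
    x ^ n = B ^ k * n + x ∧ B ^ (k - 1) ≤ x ∧ x < B ^ k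

/-- If `(x, n, B, k)` is a prefix polymorphism and `j` is the number of digits
of `n` in base `B`, then `(k-1)·(n-1) ≤ j`. -/
theorem prefix_polymorphism_knj_inequality (x n B k j : ℕ)
    (h : IsPrefixPolymorphism x n B k)
    (hj_pos : 0 < j) (hj_lower : B ^ (j - 1) ≤ n) (hj_upper : n < B ^ j) :
    (k - 1) * (n - 1) ≤ j := by
  obtain ⟨hx, hn, hB, hk, heq, hlo, hhi⟩ := h
  have h1 : x ^ n < B ^ (k + j) := by
    calc x ^ n = B ^ k * n + x := heq
    _ < B ^ k * n + B ^ k := by omega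
    _ = B ^ k * (n + 1) := by ring
    _ ≤ B ^ k * B ^ j := by
        exact Nat.mul_le_mul_left _ (by omega)
    _ = B ^ (k + j) := (pow_add B k j).symm
  have h2 : B ^ ((k - 1) * n) ≤ x ^ n := by
    rw [pow_mul]
    exact Nat.pow_le_pow_left hlo n
  have h3 : (k - 1) * n < k + j :=
    (Nat.pow_lt_pow_iff_right (by omega : 1 < B)).mp (lt_of_le_of_lt h2 h1)
  have h4 : (k - 1) * (n - 1) + (k - 1) = (k - 1) * n := by
    rw [← Nat.mul_succ]; congr 1; omega
  omega
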